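/- For every z ∈ H with Im z > 0, one has Im( z · ρ′(z) / ρ(z) ) ≠ 0, where ρ′ denotes the complex derivative of ρ. -/

import Mathlib

open Polynomial Matrix

/-- The matrix `A_m(z)` with rows `(z + α β⁻¹, α + β)` and `(z(α⁻¹+β⁻¹), z + β α⁻¹)`. -/
noncomputable def aztecA (a b : ℝ) (z : ℂ) : Matrix (Fin 2) (Fin 2) ℂ :=
  !![z + (a : ℂ) * ((b : ℂ))⁻¹, (a : ℂ) + (b : ℂ);
     z * (((a : ℂ))⁻¹ + ((b : ℂ))⁻¹), z + (b : ℂ) * ((a : ℂ))⁻¹]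

/-- `T(z) = A_1(z) A_2(z) ⋯ A_k(z)`. -/
noncomputable def aztecT {k : ℕ} (α β : Fin k → ℝ) (z : ℂ) : Matrix (Fin 2) (Fin 2) ℂ :=
  (List.ofFn fun m => aztecA (α m) (β m) z).prod

/-! ### Auxiliary results -/

/-- A `2 × 2` complex matrix with (strictly) positive real entries. -/
def AztecPosM (M : Matrix (Fin 2) (Fin 2) ℂ) : Prop :=
  ∀ i j, 0 < (M i j).re ∧ (M i j).im = 0

lemma AztecPosM.mul {A B : Matrix (Fin 2) (Fin 2) ℂ} (hA : AztecPosM A) (hB : AztecPosM B) :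
    AztecPosM (A * B) := by
  intro i j
  have a0 := hA i 0; have a1 := hA i 1
  have b0 := hB 0 j; have b1 := hB 1 j
  constructor
  · rw [Matrix.mul_apply, Fin.sum_univ_two, Complex.add_re, Complex.mul_re, Complex.mul_re,
      a0.2, a1.2, b0.2, b1.2]
    nlinarith [a0.1, a1.1, b0.1, b1.1]
  · rw [Matrix.mul_apply, Fin.sum_univ_two, Complex.add_im, Complex.mul_im, Complex.mul_im,
      a0.2, a1.2, b0.2, b1.2]
    ring

lemma AztecPosM.listProd : ∀ (l : List (Matrix (Fin 2) (Fin 2) ℂ)),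
    (∀ M ∈ l, AztecPosM M) → l ≠ [] → AztecPosM l.prod := by
  intro l
  induction l with
  | nil => intro _ h; exact absurd rfl h
  | cons A t ih =>
    intro h _
    rcases eq_or_ne t [] with rfl | ht
    · simpa using h A (by simp)
    · rw [List.prod_cons]
      exact (h A (by simp)).mul (ih (fun M hM => h M (by simp [hM])) ht)

lemma aztecA_posM {a b : ℝ} (ha : 0 < a) (hb : 0 < b) {w : ℂ} (him : w.im = 0) (hre : 0 < w.re) :
    AztecPosM (aztecA a b w) := by
  have hab : (0:ℝ) < a * b⁻¹ := by positivity
  have hba : (0:ℝ) < b * a⁻¹ := by positivity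
  have hinv : (0:ℝ) < a⁻¹ + b⁻¹ := by positivity
  have hadd : (0:ℝ) < a + b := by positivity
  intro i j
  fin_cases i <;> fin_cases j <;> constructor <;>
    simp [aztecA, Complex.add_re, Complex.add_im, Complex.mul_re, Complex.mul_im, him,
      ← Complex.ofReal_inv, ← Complex.ofReal_mul, ← Complex.ofReal_add] <;>
    nlinarith [hre, hab, hba, hinv, hadd]

lemma aztecA_det {a b : ℝ} (ha : a ≠ 0) (hb : b ≠ 0) (z : ℂ) :
    (aztecA a b z).det = (z - 1) ^ 2 := by
  have ha' : (a:ℂ) ≠ 0 := Complex.ofReal_ne_zero.mpr ha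
  have hb' : (b:ℂ) ≠ 0 := Complex.ofReal_ne_zero.mpr hb
  rw [aztecA, Matrix.det_fin_two_of]
  field_simp
  ring

lemma aztecT_det {k : ℕ} (α β : Fin k → ℝ) (hα : ∀ m, α m ≠ 0) (hβ : ∀ m, β m ≠ 0) (z : ℂ) :
    (aztecT α β z).det = ((z - 1) ^ k) ^ 2 := by
  unfold aztecT
  rw [show ((List.ofFn fun m => aztecA (α m) (β m) z).prod).det
      = Matrix.detMonoidHom ((List.ofFn fun m => aztecA (α m) (β m) z).prod) from rfl,
    map_list_prod, List.map_ofFn, List.prod_ofFn]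
  have h : ∀ m : Fin k, (Matrix.detMonoidHom ∘ fun m => aztecA (α m) (β m) z) m = (z-1)^2 := by
    intro m
    simpa [Matrix.detMonoidHom] using aztecA_det (hα m) (hβ m) z
  rw [Finset.prod_congr rfl (fun m _ => h m), Finset.prod_const, Finset.card_univ,
    Fintype.card_fin, pow_right_comm]

lemma aztecT_posM {k : ℕ} (hk : 1 ≤ k) (α β : Fin k → ℝ) (hα : ∀ m, 0 < α m)
    (hβ : ∀ m, 0 < β m) {w : ℂ} (him : w.im = 0) (hre : 0 < w.re) :
    AztecPosM (aztecT α β w) := by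
  apply AztecPosM.listProd
  · intro M hM
    obtain ⟨m, rfl⟩ := List.mem_ofFn.mp hM
    exact aztecA_posM (hα m) (hβ m) him hre
  · intro h
    have := congrArg List.length h
    simp at this
    omega

/-- The polynomial version of `aztecA`. -/
noncomputable def aztecApoly (a b : ℝ) : Matrix (Fin 2) (Fin 2) (Polynomial ℂ) :=
  !![X + C ((a : ℂ) * ((b : ℂ))⁻¹), C ((a : ℂ) + (b : ℂ));
     X * C (((a : ℂ))⁻¹ + ((b : ℂ))⁻¹), X + C ((b : ℂ) * ((a : ℂ))⁻¹)]

/-- The polynomial `P(z) = Tr T(z)`. -/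
noncomputable def aztecPpoly {k : ℕ} (α β : Fin k → ℝ) : Polynomial ℂ :=
  Matrix.trace (List.ofFn fun m => aztecApoly (α m) (β m)).prod

lemma aztecPpoly_eval {k : ℕ} (α β : Fin k → ℝ) (z : ℂ) :
    eval z (aztecPpoly α β) = Matrix.trace (aztecT α β z) := by
  have hmap : ∀ m : Fin k,
      ((Polynomial.evalRingHom z).mapMatrix (aztecApoly (α m) (β m))) = aztecA (α m) (β m) z := by
    intro m
    ext i j
    fin_cases i <;> fin_cases j <;>
      simp [aztecApoly, aztecA, RingHom.mapMatrix_apply, Matrix.map_apply]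
  have hprod : ((Polynomial.evalRingHom z).mapMatrix)
        ((List.ofFn fun m => aztecApoly (α m) (β m)).prod)
      = (List.ofFn fun m => aztecA (α m) (β m) z).prod := by
    rw [map_list_prod, List.map_ofFn]
    exact congrArg List.prod (congrArg List.ofFn (funext fun m => hmap m))
  unfold aztecPpoly aztecT
  rw [← hprod, Matrix.trace_fin_two, Matrix.trace_fin_two]
  simp [RingHom.mapMatrix_apply, Matrix.map_apply]

lemma aztecT_trace_conj {k : ℕ} (α β : Fin k → ℝ) (z : ℂ) :
    Matrix.trace (aztecT α β ((starRingEnd ℂ) z)) = (starRingEnd ℂ) (Matrix.trace (aztecT α β z)) := by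
  have hmap : ∀ m : Fin k, aztecA (α m) (β m) ((starRingEnd ℂ) z)
      = ((starRingEnd ℂ).mapMatrix) (aztecA (α m) (β m) z) := by
    intro m; ext i j
    fin_cases i <;> fin_cases j <;>
      simp [aztecA, RingHom.mapMatrix_apply, Matrix.map_apply, _root_.map_add, _root_.map_mul,
        map_inv₀, Complex.conj_ofReal]
  have hlist : (List.ofFn fun m => aztecA (α m) (β m) ((starRingEnd ℂ) z))
      = (List.ofFn fun m => aztecA (α m) (β m) z).map ((starRingEnd ℂ).mapMatrix) := by
    rw [List.map_ofFn]
    exact congrArg List.ofFn (funext fun m => (hmap m))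
  unfold aztecT
  rw [hlist, ← map_list_prod, Matrix.trace_fin_two, Matrix.trace_fin_two]
  simp [RingHom.mapMatrix_apply, Matrix.map_apply, map_add]

/-- Nonvanishing and nonnegative imaginary part of `z p'(z)/p(z)` for monic products of
linear factors with real nonpositive roots, at points of the upper half plane. -/
lemma aztec_cauchy (z : ℂ) (hz : 0 < z.im) : ∀ (m : Multiset ℂ),
    (∀ a ∈ m, a.im = 0 ∧ a.re ≤ 0) →
    eval z (Multiset.map (fun a => X - C a) m).prod ≠ 0 ∧
      0 ≤ (z * eval z (derivative (Multiset.map (fun a => X - C a) m).prod) /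
            eval z (Multiset.map (fun a => X - C a) m).prod).im := by
  intro m
  induction m using Multiset.induction_on with
  | empty => intro _; simp
  | cons a s ih =>
    intro hm
    obtain ⟨hq, hqim⟩ := ih (fun b hb => hm b (Multiset.mem_cons_of_mem hb))
    have ha := hm a (Multiset.mem_cons_self a s)
    have hza : z - a ≠ 0 := by
      intro h
      have h' : z = a := sub_eq_zero.mp h
      rw [h', ha.1] at hz
      exact lt_irrefl 0 hz
    rw [Multiset.map_cons, Multiset.prod_cons]
    have heval : eval z ((X - C a) * (Multiset.map (fun b => X - C b) s).prod)
        = (z - a) * eval z (Multiset.map (fun b => X - C b) s).prod := by simp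
    have hder : derivative ((X - C a) * (Multiset.map (fun b => X - C b) s).prod)
        = (Multiset.map (fun b => X - C b) s).prod
          + (X - C a) * derivative (Multiset.map (fun b => X - C b) s).prod := by
      rw [derivative_mul]; simp
    constructor
    · rw [heval]; exact mul_ne_zero hza hq
    · rw [heval, hder]
      have hsplit : z * eval z ((Multiset.map (fun b => X - C b) s).prod
            + (X - C a) * derivative (Multiset.map (fun b => X - C b) s).prod) /
          ((z - a) * eval z (Multiset.map (fun b => X - C b) s).prod)
          = z / (z - a) + z * eval z (derivative (Multiset.map (fun b => X - C b) s).prod) /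
              eval z (Multiset.map (fun b => X - C b) s).prod := by
        rw [eval_add, eval_mul]
        simp only [eval_sub, eval_X, eval_C]
        field_simp
      rw [hsplit, Complex.add_im]
      have h1 : 0 ≤ (z / (z - a)).im := by
        rw [Complex.div_im, div_sub_div_same]
        apply div_nonneg _ (Complex.normSq_nonneg _)
        have hnum : z.im * (z - a).re - z.re * (z - a).im = (-a.re) * z.im := by
          simp [Complex.sub_re, Complex.sub_im, ha.1]
          ring
        rw [hnum]
        exact mul_nonneg (by linarith [ha.2]) hz.le
      exact add_nonneg h1 hqim

/-- The key Herglotz property: if all roots of `s` are real and `≤ 0` then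
`Im (z s'(z)/s(z) - κ z/(z-1)) > 0` on the upper half plane. -/
lemma aztec_herglotz (κ : ℕ) (hκ : 1 ≤ κ) (s : Polynomial ℂ) (hs : s ≠ 0)
    (hroots : ∀ a ∈ s.roots, a.im = 0 ∧ a.re ≤ 0) (z : ℂ) (hz : 0 < z.im) :
    eval z s ≠ 0 ∧ 0 < (z * eval z (derivative s) / eval z s - (κ : ℂ) * z / (z - 1)).im := by
  have hc : s.leadingCoeff ≠ 0 := leadingCoeff_ne_zero.mpr hs
  have hfac : s = C s.leadingCoeff * (Multiset.map (fun a => X - C a) s.roots).prod :=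
    (IsAlgClosed.splits s).eq_prod_roots
  obtain ⟨hq, hqim⟩ := aztec_cauchy z hz s.roots hroots
  have h1 : eval z s = s.leadingCoeff * eval z (Multiset.map (fun a => X - C a) s.roots).prod := by
    conv_lhs => rw [hfac]
    simp
  have h2 : eval z (derivative s)
      = s.leadingCoeff * eval z (derivative (Multiset.map (fun a => X - C a) s.roots).prod) := by
    conv_lhs => rw [hfac, derivative_C_mul]
    simp
  have hne : eval z s ≠ 0 := by rw [h1]; exact mul_ne_zero hc hq
  refine ⟨hne, ?_⟩
  have hred : z * eval z (derivative s) / eval z s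
      = z * eval z (derivative (Multiset.map (fun a => X - C a) s.roots).prod) /
          eval z (Multiset.map (fun a => X - C a) s.roots).prod := by
    rw [h1, h2,
      show z * (s.leadingCoeff * eval z (derivative (Multiset.map (fun a => X - C a) s.roots).prod))
        = s.leadingCoeff * (z * eval z (derivative (Multiset.map (fun a => X - C a) s.roots).prod))
        by ring,
      mul_div_mul_left _ _ hc]
  have hz1 : z - (1:ℂ) ≠ 0 := by
    intro h
    have h' : z = 1 := sub_eq_zero.mp h
    rw [h'] at hz
    simp at hz
  have hN : 0 < Complex.normSq (z - 1) := Complex.normSq_pos.mpr hz1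
  have hterm : ((κ : ℂ) * z / (z - 1)).im = -((κ:ℝ) * z.im / Complex.normSq (z - 1)) := by
    rw [mul_div_assoc, Complex.mul_im, Complex.div_im]
    simp [Complex.sub_re, Complex.sub_im]
    field_simp
    ring
  rw [Complex.sub_im, hred, hterm]
  have hκ' : (0:ℝ) < (κ:ℝ) := by
    have : (1:ℝ) ≤ (κ:ℝ) := by exact_mod_cast hκ
    linarith
  have hpos : 0 < (κ:ℝ) * z.im / Complex.normSq (z - 1) := by
    apply div_pos (mul_pos hκ' hz) hN
  linarith

/-- Every point `a` where `Tr T(a) = ±2 (a-1)^(K+1)` is real and nonpositive. -/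
lemma aztec_root_cond {K : ℕ} {α β : Fin (K+1) → ℝ} (hα : ∀ m, 0 < α m) (hβ : ∀ m, 0 < β m)
    {ρ : ℂ → ℂ}
    (heig : ∀ z : ℂ, 0 < z.im →
      (z - 1) ^ (K+1) * (ρ z) ^ 2 - Matrix.trace (aztecT α β z) * ρ z + (z - 1) ^ (K+1) = 0)
    (habs : ∀ z : ℂ, 0 < z.im → 1 < ‖ρ z‖)
    (ε : ℝ) (hε : ε ^ 2 = 1) (a : ℂ)
    (ha : Matrix.trace (aztecT α β a) = 2 * (ε : ℂ) * (a - 1) ^ (K+1)) :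
    a.im = 0 ∧ a.re ≤ 0 := by
  have hεc : ((ε:ℂ))^2 = 1 := by
    have := congrArg (fun x : ℝ => (x:ℂ)) hε
    push_cast at this
    exact this
  have habsε : |ε| = 1 := by nlinarith [abs_nonneg ε, sq_abs ε]
  have main : ∀ b : ℂ, 0 < b.im →
      Matrix.trace (aztecT α β b) = 2 * (ε:ℂ) * (b - 1)^(K+1) → False := by
    intro b hb htr
    have hb1 : b - 1 ≠ 0 := by
      intro h
      have h' : b = 1 := sub_eq_zero.mp h
      rw [h'] at hb
      simp at hb
    have hsq : (b - 1)^(K+1) * (ρ b - (ε:ℂ))^2 = 0 := by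
      linear_combination heig b hb + ρ b * htr + ((b-1)^(K+1)) * hεc
    have h2 : (ρ b - (ε:ℂ))^2 = 0 := by
      rcases mul_eq_zero.mp hsq with h | h
      · exact absurd h (pow_ne_zero _ hb1)
      · exact h
    have h3 : ρ b = (ε:ℂ) := sub_eq_zero.mp (pow_eq_zero_iff two_ne_zero |>.mp h2)
    have hlt := habs b hb
    rw [h3, Complex.norm_real, Real.norm_eq_abs, habsε] at hlt
    exact lt_irrefl 1 hlt
  have him : a.im = 0 := by
    rcases lt_trichotomy a.im 0 with h | h | h
    · exfalso
      apply main ((starRingEnd ℂ) a)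
      · rw [Complex.conj_im]
        linarith
      · rw [aztecT_trace_conj, ha]
        simp only [_root_.map_mul, map_pow, _root_.map_sub, _root_.map_one, _root_.map_ofNat,
          Complex.conj_ofReal]
    · exact h
    · exact (main a h ha).elim
  refine ⟨him, ?_⟩
  by_contra hre
  push_neg at hre
  have hPos : AztecPosM (aztecT α β a) := aztecT_posM (by omega) α β hα hβ him hre
  have hdet : (aztecT α β a).det = ((a - 1)^(K+1))^2 :=
    aztecT_det α β (fun m => (hα m).ne') (fun m => (hβ m).ne') a
  have htr2 : (Matrix.trace (aztecT α β a))^2 = 4 * ((a-1)^(K+1))^2 := by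
    rw [ha]
    linear_combination (4*((a-1)^(K+1))^2) * hεc
  rw [Matrix.trace_fin_two] at htr2
  rw [Matrix.det_fin_two] at hdet
  have hkey : (aztecT α β a 0 0 - aztecT α β a 1 1)^2
      + 4 * (aztecT α β a 0 1 * aztecT α β a 1 0) = 0 := by
    linear_combination htr2 - 4 * hdet
  have e00 : aztecT α β a 0 0 = ((aztecT α β a 0 0).re : ℂ) := by
    apply Complex.ext <;> simp [(hPos 0 0).2]
  have e11 : aztecT α β a 1 1 = ((aztecT α β a 1 1).re : ℂ) := by
    apply Complex.ext <;> simp [(hPos 1 1).2]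
  have e01 : aztecT α β a 0 1 = ((aztecT α β a 0 1).re : ℂ) := by
    apply Complex.ext <;> simp [(hPos 0 1).2]
  have e10 : aztecT α β a 1 0 = ((aztecT α β a 1 0).re : ℂ) := by
    apply Complex.ext <;> simp [(hPos 1 0).2]
  rw [e00, e11, e01, e10] at hkey
  have hkey' : ((aztecT α β a 0 0).re - (aztecT α β a 1 1).re)^2
      + 4 * ((aztecT α β a 0 1).re * (aztecT α β a 1 0).re) = 0 := by
    exact_mod_cast hkey
  nlinarith [(hPos 0 1).1, (hPos 1 0).1,
    sq_nonneg ((aztecT α β a 0 0).re - (aztecT α β a 1 1).re)]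

/-- if `ρ` is the (holomorphic) eigenvalue of `Φ` of modulus `> 1` on the
upper half-plane, then `Im(z ρ′(z)/ρ(z)) ≠ 0` for every `z` with `Im z > 0`. -/
theorem stmt13 (k : ℕ) (hk : 1 ≤ k) (α β : Fin k → ℝ)
    (hα : ∀ m, 0 < α m) (hβ : ∀ m, 0 < β m)
    (hprod : ∏ m, α m = ∏ m, β m)
    (ρ : ℂ → ℂ)
    (hdiff : ∀ z : ℂ, 0 < z.im → DifferentiableAt ℂ ρ z)
    (heig : ∀ z : ℂ, 0 < z.im →
        (z - 1) ^ k * (ρ z) ^ 2 - Matrix.trace (aztecT α β z) * ρ z + (z - 1) ^ k = 0)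
    (habs : ∀ z : ℂ, 0 < z.im → 1 < ‖ρ z‖) :
    ∀ z : ℂ, 0 < z.im → (z * deriv ρ z / ρ z).im ≠ 0 := by
  obtain ⟨K, rfl⟩ : ∃ K, k = K + 1 := ⟨k - 1, by omega⟩
  intro z hz him0
  -- basic nonvanishing facts
  have hz1 : z - (1:ℂ) ≠ 0 := by
    intro h
    have h' : z = 1 := sub_eq_zero.mp h
    rw [h'] at hz; simp at hz
  have habs_z := habs z hz
  have hρ0 : ρ z ≠ 0 := by
    intro h; rw [h] at habs_z; simp at habs_z; linarith
  have hρ1 : ρ z - 1 ≠ 0 := by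
    intro h
    have h' : ρ z = 1 := sub_eq_zero.mp h
    rw [h'] at habs_z; simp at habs_z
  have hρm1 : ρ z + 1 ≠ 0 := by
    intro h
    have h' : ρ z = -1 := by linear_combination h
    rw [h'] at habs_z; simp at habs_z
  -- the polynomials s₊ and s₋
  set P : Polynomial ℂ := aztecPpoly α β with hP
  set sp : Polynomial ℂ := P - C 2 * (X - 1) ^ (K+1) with hsp
  set sm : Polynomial ℂ := P + C 2 * (X - 1) ^ (K+1) with hsm
  have hevalp : ∀ w : ℂ, eval w sp = Matrix.trace (aztecT α β w) - 2 * (w-1)^(K+1) := by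
    intro w; simp [hsp, hP, aztecPpoly_eval]
  have hevalm : ∀ w : ℂ, eval w sm = Matrix.trace (aztecT α β w) + 2 * (w-1)^(K+1) := by
    intro w; simp [hsm, hP, aztecPpoly_eval]
  -- s₊, s₋ are nonzero
  have hT1 : AztecPosM (aztecT α β 1) := aztecT_posM (by omega) α β hα hβ (by simp) (by simp)
  have htr1 : 0 < (Matrix.trace (aztecT α β 1)).re := by
    rw [Matrix.trace_fin_two, Complex.add_re]
    exact add_pos (hT1 0 0).1 (hT1 1 1).1
  have hspne : sp ≠ 0 := by
    intro h
    have h1 := hevalp 1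
    rw [h, eval_zero] at h1
    simp at h1
    rw [← h1] at htr1
    simp at htr1
  have hsmne : sm ≠ 0 := by
    intro h
    have h1 := hevalm 1
    rw [h, eval_zero] at h1
    simp at h1
    rw [← h1] at htr1
    simp at htr1
  -- all roots of s₊, s₋ are real and ≤ 0
  have hrootsp : ∀ a ∈ sp.roots, a.im = 0 ∧ a.re ≤ 0 := by
    intro a haa
    have hev : eval a sp = 0 := (mem_roots'.mp haa).2
    rw [hevalp a] at hev
    have htr : Matrix.trace (aztecT α β a) = 2 * ((1:ℝ):ℂ) * (a-1)^(K+1) := by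
      push_cast
      linear_combination hev
    exact aztec_root_cond hα hβ heig habs 1 (by norm_num) a htr
  have hrootsm : ∀ a ∈ sm.roots, a.im = 0 ∧ a.re ≤ 0 := by
    intro a haa
    have hev : eval a sm = 0 := (mem_roots'.mp haa).2
    rw [hevalm a] at hev
    have htr : Matrix.trace (aztecT α β a) = 2 * ((-1:ℝ):ℂ) * (a-1)^(K+1) := by
      push_cast
      linear_combination hev
    exact aztec_root_cond hα hβ heig habs (-1) (by norm_num) a htr
  -- the two Herglotz quantities
  obtain ⟨hspval, hspim⟩ := aztec_herglotz (K+1) (by omega) sp hspne hrootsp z hz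
  obtain ⟨hsmval, hsmim⟩ := aztec_herglotz (K+1) (by omega) sm hsmne hrootsm z hz
  set up : ℂ := z * eval z (derivative sp) / eval z sp - ((K+1 : ℕ) : ℂ) * z / (z - 1) with hup
  set um : ℂ := z * eval z (derivative sm) / eval z sm - ((K+1 : ℕ) : ℂ) * z / (z - 1) with hum
  -- pointwise algebraic identities from the eigenvalue equation
  have hopen : IsOpen {w : ℂ | 0 < w.im} := isOpen_lt continuous_const Complex.continuous_im
  have hmem : {w : ℂ | 0 < w.im} ∈ nhds z := hopen.mem_nhds hz
  have hE1p : eval z sp * ρ z = (z - 1)^(K+1) * (ρ z - 1)^2 := by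
    rw [hevalp z]
    linear_combination -(heig z hz)
  have hE1m : eval z sm * ρ z = (z - 1)^(K+1) * (ρ z + 1)^2 := by
    rw [hevalm z]
    linear_combination -(heig z hz)
  have hevp : (fun w => eval w sp * ρ w) =ᶠ[nhds z] (fun w => (w - 1)^(K+1) * (ρ w - 1)^2) :=
    Filter.eventuallyEq_of_mem hmem (fun w hw => by
      have hw' : 0 < w.im := hw
      rw [hevalp w]
      linear_combination -(heig w hw'))
  have hevm : (fun w => eval w sm * ρ w) =ᶠ[nhds z] (fun w => (w - 1)^(K+1) * (ρ w + 1)^2) :=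
    Filter.eventuallyEq_of_mem hmem (fun w hw => by
      have hw' : 0 < w.im := hw
      rw [hevalm w]
      linear_combination -(heig w hw'))
  have hbase : HasDerivAt (fun w : ℂ => (w - 1)^(K+1)) (((K:ℂ)+1) * (z-1)^K) z := by
    have h := ((hasDerivAt_id z).sub_const (1:ℂ)).pow (K+1)
    simpa [Pi.pow_def] using h
  have hsub1 : HasDerivAt (fun w => (ρ w - 1)^2) (2 * (ρ z - 1) * deriv ρ z) z := by
    have h := (((hdiff z hz).hasDerivAt).sub_const (1:ℂ)).pow 2
    simpa [Pi.pow_def] using h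
  have hadd1 : HasDerivAt (fun w => (ρ w + 1)^2) (2 * (ρ z + 1) * deriv ρ z) z := by
    have h := (((hdiff z hz).hasDerivAt).add_const (1:ℂ)).pow 2
    simpa [Pi.pow_def] using h
  have hd1p : HasDerivAt (fun w => eval w sp * ρ w)
      (eval z (derivative sp) * ρ z + eval z sp * deriv ρ z) z :=
    (sp.hasDerivAt z).mul (hdiff z hz).hasDerivAt
  have hd1m : HasDerivAt (fun w => eval w sm * ρ w)
      (eval z (derivative sm) * ρ z + eval z sm * deriv ρ z) z :=
    (sm.hasDerivAt z).mul (hdiff z hz).hasDerivAt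
  have hd2p : HasDerivAt (fun w => (w - 1)^(K+1) * (ρ w - 1)^2)
      ((((K:ℂ)+1) * (z-1)^K) * (ρ z - 1)^2 + (z-1)^(K+1) * (2 * (ρ z - 1) * deriv ρ z)) z :=
    hbase.mul hsub1
  have hd2m : HasDerivAt (fun w => (w - 1)^(K+1) * (ρ w + 1)^2)
      ((((K:ℂ)+1) * (z-1)^K) * (ρ z + 1)^2 + (z-1)^(K+1) * (2 * (ρ z + 1) * deriv ρ z)) z :=
    hbase.mul hadd1
  have hE2p : eval z (derivative sp) * ρ z + eval z sp * deriv ρ z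
      = (((K:ℂ)+1) * (z-1)^K) * (ρ z - 1)^2 + (z-1)^(K+1) * (2 * (ρ z - 1) * deriv ρ z) :=
    hd1p.unique (hd2p.congr_of_eventuallyEq hevp)
  have hE2m : eval z (derivative sm) * ρ z + eval z sm * deriv ρ z
      = (((K:ℂ)+1) * (z-1)^K) * (ρ z + 1)^2 + (z-1)^(K+1) * (2 * (ρ z + 1) * deriv ρ z) :=
    hd1m.unique (hd2m.congr_of_eventuallyEq hevm)
  -- value identities
  have hvalp : up = z * deriv ρ z * (ρ z + 1) / (ρ z * (ρ z - 1)) := by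
    rw [hup, div_sub_div _ _ hspval hz1,
      div_eq_div_iff (mul_ne_zero hspval hz1) (mul_ne_zero hρ0 hρ1)]
    push_cast
    linear_combination (z*(z-1)*(ρ z - 1)) * hE2p
      - (z*(((K:ℂ)+1)*(ρ z - 1) + 2*(z-1)*(deriv ρ z))) * hE1p
  have hvalm : um = z * deriv ρ z * (ρ z - 1) / (ρ z * (ρ z + 1)) := by
    rw [hum, div_sub_div _ _ hsmval hz1,
      div_eq_div_iff (mul_ne_zero hsmval hz1) (mul_ne_zero hρ0 hρm1)]
    push_cast
    linear_combination (z*(z-1)*(ρ z + 1)) * hE2m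
      - (z*(((K:ℂ)+1)*(ρ z + 1) + 2*(z-1)*(deriv ρ z))) * hE1m
  have hG2 : up * um = (z * deriv ρ z / ρ z)^2 := by
    rw [hvalp, hvalm, div_mul_div_comm, div_pow,
      div_eq_div_iff (mul_ne_zero (mul_ne_zero hρ0 hρ1) (mul_ne_zero hρ0 hρm1))
        (pow_ne_zero 2 hρ0)]
    ring
  -- final contradiction
  set t : ℝ := (z * deriv ρ z / ρ z).re with ht
  have hGre : z * deriv ρ z / ρ z = (t : ℂ) := by
    apply Complex.ext
    · simp [ht]
    · simp [him0]
  rw [hGre] at hG2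
  have hup0 : up ≠ 0 := by
    intro h
    rw [h] at hspim
    simp at hspim
  have humval : um = ((t^2 : ℝ) : ℂ) / up := by
    rw [eq_div_iff hup0]
    push_cast
    linear_combination hG2
  have hle : um.im ≤ 0 := by
    rw [humval, Complex.div_im]
    simp only [Complex.ofReal_im, Complex.ofReal_re, zero_mul, zero_div, zero_sub, neg_nonpos]
    exact div_nonneg (mul_nonneg (sq_nonneg t) hspim.le) (Complex.normSq_nonneg _)
  linarith
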